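/- Let (Ω, 𝔉, μ) be a probability space, Θ ⊆ ℝ^p a nonempty compact set, Z a nonempty set, and z_i : Ω → Z (i = 1, 2, …) a sequence of maps (the data). Let f : Z × Θ → ℝ satisfy f(z,θ) ≥ δ̄ for some δ̄ > 0 and all z, θ. For each r ∈ ℕ let f̃_r : Z × Θ → ℝ be continuous in θ and assume sup_{z∈Z, θ∈Θ}|f̃_r(z,θ) − f(z,θ)| → 0 as r → ∞. Let R : ℕ → ℕ be monotonically increasing with R(n) → ∞. Define L_n(ω, θ) = (1/n) Σ_{i=1}^n log f(z_i(ω), θ) and L̃_n(ω, θ) = (1/n) Σ_{i=1}^n log f̃_{R(n)}(z_i(ω), θ). Let Q₀ : Θ → ℝ be continuous and uniquely maximized at θ₀ ∈ Θ, and assume sup_{θ∈Θ}|L_n(ω,θ) − Q₀(θ)| → 0 in probability. Let θ̂_n : Ω → Θ satisfy L̃_n(ω, θ̂_n(ω)) = sup_{θ∈Θ} L̃_n(ω, θ) for every ω, and assume the maps ω ↦ sup_θ|L_n − Q₀|, ω ↦ sup_θ|L̃_n − L_n| and ω ↦ ‖θ̂_n(ω) − θ₀‖ are measurable. Then the maximum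 approximated likelihood estimator θ̂_n converges in probability to θ₀: for every ε > 0, μ{ω : ‖θ̂_n(ω) − θ₀‖ > ε} → 0 as n → ∞. -/

import Mathlib

open MeasureTheory Filter Topology

/-- Theorem 6 of the paper: consistency of the maximum approximated likelihood estimator.
Here `L_n(ω,θ) = (1/n) ∑ log f(z_i(ω),θ)` and
`L̃_n(ω,θ) = (1/n) ∑ log f̃_{R(n)}(z_i(ω),θ)` are written out explicitly. -/
lemma log_close_aux {δbar η a b : ℝ} (hδ : 0 < δbar) (hη : 0 < η)
    (hb : δbar ≤ b) (hab : |a - b| ≤ min (δbar/2) (η*δbar/8)) :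
    |Real.log a - Real.log b| ≤ η/4 := by
  have h1 : |a - b| ≤ δbar/2 := le_trans hab (min_le_left _ _)
  have h2 : |a - b| ≤ η*δbar/8 := le_trans hab (min_le_right _ _)
  obtain ⟨h1l, h1r⟩ := abs_le.1 h1
  obtain ⟨h2l, h2r⟩ := abs_le.1 h2
  have ha : δbar/2 ≤ a := by linarith
  have ha0 : 0 < a := by linarith
  have hb0 : 0 < b := by linarith
  have hAB : Real.log a - Real.log b ≤ η/4 := by
    rw [← Real.log_div ha0.ne' hb0.ne']
    have := Real.log_le_sub_one_of_pos (div_pos ha0 hb0)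
    have h3 : a / b - 1 = (a - b) / b := by field_simp
    have h4 : (a - b) / b ≤ η/4 := by
      rw [div_le_iff₀ hb0]; nlinarith
    linarith
  have hBA : Real.log b - Real.log a ≤ η/4 := by
    rw [← Real.log_div hb0.ne' ha0.ne']
    have := Real.log_le_sub_one_of_pos (div_pos hb0 ha0)
    have h3 : b / a - 1 = (b - a) / a := by field_simp
    have h4 : (b - a) / a ≤ η/4 := by
      rw [div_le_iff₀ ha0]; nlinarith
    linarith
  exact abs_le.2 ⟨by linarith, hAB⟩

theorem stmt_4 {p : ℕ} {Ω : Type*} [MeasurableSpace Ω] (μ : Measure Ω) [IsProbabilityMeasure μ]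
    {Θ : Set (EuclideanSpace ℝ (Fin p))} (hΘne : Θ.Nonempty) (hΘcpt : IsCompact Θ)
    {Z : Type*} [Nonempty Z] (z : ℕ → Ω → Z)
    (f : Z → EuclideanSpace ℝ (Fin p) → ℝ)
    (δbar : ℝ) (hδbar : 0 < δbar) (hf : ∀ zz, ∀ θ ∈ Θ, δbar ≤ f zz θ)
    (ft : ℕ → Z → EuclideanSpace ℝ (Fin p) → ℝ)
    (hftcont : ∀ r zz, ContinuousOn (ft r zz) Θ)
    (hconv : ∀ ε > (0 : ℝ), ∃ r0 : ℕ, ∀ r ≥ r0, ∀ zz, ∀ θ ∈ Θ, |ft r zz θ - f zz θ| ≤ ε)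
    (R : ℕ → ℕ) (hRmono : Monotone R) (hRtop : Tendsto R atTop atTop)
    (Q0 : EuclideanSpace ℝ (Fin p) → ℝ) (hQ0cont : ContinuousOn Q0 Θ)
    (θ0 : EuclideanSpace ℝ (Fin p)) (hθ0 : θ0 ∈ Θ)
    (hθ0max : ∀ θ ∈ Θ, θ ≠ θ0 → Q0 θ < Q0 θ0)
    (θhat : ℕ → Ω → EuclideanSpace ℝ (Fin p)) (hθhatmem : ∀ n ω, θhat n ω ∈ Θ)
    (hargmax : ∀ (n : ℕ) ω,
      (n : ℝ)⁻¹ * ∑ i ∈ Finset.range n, Real.log (ft (R n) (z i ω) (θhat n ω)) =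
        sSup ((fun θ => (n : ℝ)⁻¹ *
          ∑ i ∈ Finset.range n, Real.log (ft (R n) (z i ω) θ)) '' Θ))
    (hbdd1 : ∀ (n : ℕ) ω, BddAbove ((fun θ =>
      |(n : ℝ)⁻¹ * ∑ i ∈ Finset.range n, Real.log (f (z i ω) θ) - Q0 θ|) '' Θ))
    (hmeas1 : ∀ n : ℕ, Measurable fun ω =>
      sSup ((fun θ =>
        |(n : ℝ)⁻¹ * ∑ i ∈ Finset.range n, Real.log (f (z i ω) θ) - Q0 θ|) '' Θ))
    (hmeas2 : ∀ n : ℕ, Measurable fun ω =>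
      sSup ((fun θ =>
        |(n : ℝ)⁻¹ * ∑ i ∈ Finset.range n, Real.log (ft (R n) (z i ω) θ) -
          (n : ℝ)⁻¹ * ∑ i ∈ Finset.range n, Real.log (f (z i ω) θ)|) '' Θ))
    (hmeas3 : ∀ n, Measurable fun ω => ‖θhat n ω - θ0‖)
    (hplim : ∀ ε > (0 : ℝ), Tendsto (fun n : ℕ => μ {ω | ε <
      sSup ((fun θ =>
        |(n : ℝ)⁻¹ * ∑ i ∈ Finset.range n, Real.log (f (z i ω) θ) - Q0 θ|) '' Θ)})
      atTop (𝓝 0)) :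
    ∀ ε > (0 : ℝ), Tendsto (fun n => μ {ω | ε < ‖θhat n ω - θ0‖}) atTop (𝓝 0) := by
  intro ε hε
  -- the "far" set
  set K : Set (EuclideanSpace ℝ (Fin p)) := Θ ∩ {θ | ε ≤ ‖θ - θ0‖} with hK
  have hKcl : IsClosed {θ : EuclideanSpace ℝ (Fin p) | ε ≤ ‖θ - θ0‖} :=
    isClosed_le continuous_const ((continuous_id.sub continuous_const).norm)
  have hKcpt : IsCompact K := hΘcpt.inter_right hKcl
  rcases K.eq_empty_or_nonempty with hKe | hKne
  · have hempty : ∀ n : ℕ, {ω | ε < ‖θhat n ω - θ0‖} = (∅ : Set Ω) := by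
      intro n
      ext ω
      simp only [Set.mem_setOf_eq, Set.mem_empty_iff_false, iff_false, not_lt]
      by_contra h
      push_neg at h
      have : θhat n ω ∈ K := ⟨hθhatmem n ω, le_of_lt h⟩
      rw [hKe] at this
      exact this
    simp only [hempty, measure_empty]
    exact tendsto_const_nhds
  · obtain ⟨θ1, hθ1K, hθ1max⟩ := hKcpt.exists_isMaxOn hKne (hQ0cont.mono Set.inter_subset_left)
    have hθ1ne : θ1 ≠ θ0 := by
      intro h
      have := hθ1K.2
      simp only [Set.mem_setOf_eq, h, sub_self, norm_zero] at this
      linarith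
    have hgap : Q0 θ1 < Q0 θ0 := hθ0max θ1 hθ1K.1 hθ1ne
    set η : ℝ := (Q0 θ0 - Q0 θ1) / 2 with hηdef
    have hη : 0 < η := by simp only [hηdef]; linarith
    set ε' : ℝ := min (δbar/2) (η*δbar/8) with hε'def
    have hε' : 0 < ε' := lt_min (by positivity) (by positivity)
    obtain ⟨r0, hr0⟩ := hconv ε' hε'
    obtain ⟨N1, hN1⟩ := (hRtop.eventually_ge_atTop r0).exists_forall_of_atTop
    -- key deterministic claim
    have key : ∀ n : ℕ, 1 ≤ n → r0 ≤ R n → ∀ ω : Ω,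
        sSup ((fun θ =>
          |(n : ℝ)⁻¹ * ∑ i ∈ Finset.range n, Real.log (f (z i ω) θ) - Q0 θ|) '' Θ) ≤ η/4 →
        ‖θhat n ω - θ0‖ ≤ ε := by
      intro n hn1 hRn ω hsup
      set L : EuclideanSpace ℝ (Fin p) → ℝ :=
        fun θ => (n : ℝ)⁻¹ * ∑ i ∈ Finset.range n, Real.log (f (z i ω) θ) with hLdef
      set Lt : EuclideanSpace ℝ (Fin p) → ℝ :=
        fun θ => (n : ℝ)⁻¹ * ∑ i ∈ Finset.range n, Real.log (ft (R n) (z i ω) θ) with hLtdef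
      have hn0 : (0:ℝ) < (n:ℝ) := by exact_mod_cast hn1
      have hftpos : ∀ zz, ∀ θ ∈ Θ, δbar/2 ≤ ft (R n) zz θ := by
        intro zz θ hθ
        have h1 := hr0 (R n) hRn zz θ hθ
        have h2 := hf zz θ hθ
        have h3 : |ft (R n) zz θ - f zz θ| ≤ δbar/2 := le_trans h1 (min_le_left _ _)
        have := (abs_le.1 h3).1
        linarith
      have hlogdiff : ∀ (i : ℕ), ∀ θ ∈ Θ,
          |Real.log (ft (R n) (z i ω) θ) - Real.log (f (z i ω) θ)| ≤ η/4 := fun i θ hθ =>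
        log_close_aux hδbar hη (hf (z i ω) θ hθ) (hr0 (R n) hRn (z i ω) θ hθ)
      have hLdiff : ∀ θ ∈ Θ, |Lt θ - L θ| ≤ η/4 := by
        intro θ hθ
        have : Lt θ - L θ = (n : ℝ)⁻¹ * ∑ i ∈ Finset.range n,
            (Real.log (ft (R n) (z i ω) θ) - Real.log (f (z i ω) θ)) := by
          simp only [hLtdef, hLdef, Finset.sum_sub_distrib, mul_sub]
        rw [this, abs_mul, abs_inv, Nat.abs_cast]
        calc ((n:ℝ))⁻¹ * |∑ i ∈ Finset.range n,
              (Real.log (ft (R n) (z i ω) θ) - Real.log (f (z i ω) θ))|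
            ≤ (n:ℝ)⁻¹ * ∑ i ∈ Finset.range n,
              |Real.log (ft (R n) (z i ω) θ) - Real.log (f (z i ω) θ)| := by
              apply mul_le_mul_of_nonneg_left (Finset.abs_sum_le_sum_abs _ _)
              positivity
          _ ≤ (n:ℝ)⁻¹ * ∑ _i ∈ Finset.range n, (η/4) := by
              apply mul_le_mul_of_nonneg_left
              · exact Finset.sum_le_sum fun i _ => hlogdiff i θ hθ
              · positivity
          _ = η/4 := by
              rw [Finset.sum_const, Finset.card_range, nsmul_eq_mul]
              field_simp
      have hLQ : ∀ θ ∈ Θ, |L θ - Q0 θ| ≤ η/4 := fun θ hθ =>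
        le_trans (le_csSup (hbdd1 n ω) ⟨θ, hθ, rfl⟩) hsup
      have hLtQ : ∀ θ ∈ Θ, |Lt θ - Q0 θ| ≤ η/2 := by
        intro θ hθ
        calc |Lt θ - Q0 θ| ≤ |Lt θ - L θ| + |L θ - Q0 θ| := abs_sub_le _ _ _
          _ ≤ η/4 + η/4 := add_le_add (hLdiff θ hθ) (hLQ θ hθ)
          _ = η/2 := by ring
      have hLtcont : ContinuousOn Lt Θ := by
        apply ContinuousOn.mul continuousOn_const
        apply continuousOn_finset_sum
        intro i _
        exact (hftcont (R n) (z i ω)).log fun θ hθ =>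
          ne_of_gt (lt_of_lt_of_le (by positivity) (hftpos (z i ω) θ hθ))
      have hbddLt : BddAbove (Lt '' Θ) := (hΘcpt.image_of_continuousOn hLtcont).bddAbove
      have h1 : Lt (θhat n ω) = sSup (Lt '' Θ) := hargmax n ω
      have h2 : Lt θ0 ≤ Lt (θhat n ω) := by
        rw [h1]; exact le_csSup hbddLt ⟨θ0, hθ0, rfl⟩
      by_contra hcon
      push_neg at hcon
      have hθhK : θhat n ω ∈ K := ⟨hθhatmem n ω, le_of_lt hcon⟩
      have h3 : Q0 (θhat n ω) ≤ Q0 θ1 := hθ1max hθhK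
      have h4 := abs_le.1 (hLtQ (θhat n ω) (hθhatmem n ω))
      have h5 := abs_le.1 (hLtQ θ0 hθ0)
      have : Q0 θ0 - Q0 θ1 = 2 * η := by simp only [hηdef]; ring
      linarith [h4.1, h4.2, h5.1, h5.2]
    -- conclude by squeezing
    refine tendsto_of_tendsto_of_tendsto_of_le_of_le'
      tendsto_const_nhds (hplim (η/4) (by positivity))
      (Filter.Eventually.of_forall fun n => zero_le) ?_
    filter_upwards [eventually_ge_atTop (max N1 1)] with n hn
    apply measure_mono
    intro ω hω
    simp only [Set.mem_setOf_eq] at hω ⊢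
    by_contra h'
    push_neg at h'
    exact absurd (key n (le_trans (le_max_right _ _) hn)
      (hN1 n (le_trans (le_max_left _ _) hn)) ω h') (not_le.2 hω)
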